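/- If lim_{n→∞} E[X̄_n] = μ with μ ≠ S, and there exist 0 < b < |μ − S| and α_b > 0 such that limsup_{n→∞} (1/n) log P( |X̄_n − μ| ≥ b ) ≤ −α_b, then limsup_{n→∞} (1/n) log P_e^{(n)} ≤ −min{ α_b, C_p (|μ − S| − b)² }, where C_p = (1−2p)²/2. -/

import Mathlib

open MeasureTheory Filter Real


private lemma hoeff_aux (p : ℝ) (hp0 : 0 ≤ p) (hp1 : p ≤ 1) (u : ℝ) :
    Real.log (1 - p + p * Real.exp u) ≤ p * u + u ^ 2 / 8 := by
  have hD : ∀ v : ℝ, 0 < 1 - p + p * Real.exp v := by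
    intro v
    rcases le_total (Real.exp v) 1 with h | h
    · nlinarith [Real.exp_pos v]
    · nlinarith [Real.exp_pos v]
  set φ : ℝ → ℝ := fun u => Real.log (1 - p + p * Real.exp u) - p * u - u ^ 2 / 8 with hφdef
  set φ' : ℝ → ℝ := fun u => p * Real.exp u / (1 - p + p * Real.exp u) - p - u / 4 with hφ'def
  have hder : ∀ v : ℝ, HasDerivAt φ (φ' v) v := by
    intro v
    have h1 : HasDerivAt (fun u : ℝ => 1 - p + p * Real.exp u) (p * Real.exp v) v :=
      ((Real.hasDerivAt_exp v).const_mul p).const_add (1 - p)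
    have h2 := h1.log (hD v).ne'
    have h3 : HasDerivAt (fun u : ℝ => p * u) p v := by
      simpa using (hasDerivAt_id v).const_mul p
    have h4 : HasDerivAt (fun u : ℝ => u ^ 2 / 8) (v / 4) v := by
      have := (hasDerivAt_pow 2 v).div_const 8
      exact this.congr_deriv (by ring)
    exact (h2.sub h3).sub h4
  have hder' : ∀ v : ℝ, HasDerivAt φ'
      ((p * Real.exp v * (1 - p + p * Real.exp v) - p * Real.exp v * (p * Real.exp v)) /
        (1 - p + p * Real.exp v) ^ 2 - 1 / 4) v := by
    intro v
    have h1 : HasDerivAt (fun u : ℝ => 1 - p + p * Real.exp u) (p * Real.exp v) v :=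
      ((Real.hasDerivAt_exp v).const_mul p).const_add (1 - p)
    have h0 : HasDerivAt (fun u : ℝ => p * Real.exp u) (p * Real.exp v) v :=
      (Real.hasDerivAt_exp v).const_mul p
    have h2 := h0.div h1 (hD v).ne'
    have h3 : HasDerivAt (fun u : ℝ => u / 4) ((1:ℝ) / 4) v := by
      simpa using (hasDerivAt_id v).div_const 4
    exact (h2.sub_const p).sub h3
  have hsec : ∀ v : ℝ,
      (p * Real.exp v * (1 - p + p * Real.exp v) - p * Real.exp v * (p * Real.exp v)) /
        (1 - p + p * Real.exp v) ^ 2 - 1 / 4 ≤ 0 := by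
    intro v
    have hDv := hD v
    rw [sub_nonpos, div_le_iff₀ (by positivity)]
    nlinarith [sq_nonneg (1 - p + p * Real.exp v - 2 * (p * Real.exp v))]
  have hanti : AntitoneOn φ' Set.univ := by
    have hdiff : Differentiable ℝ φ' := fun v => (hder' v).differentiableAt
    apply antitoneOn_of_deriv_nonpos convex_univ hdiff.continuous.continuousOn
      (hdiff.differentiableOn)
    intro x _
    rw [(hder' x).deriv]
    exact hsec x
  have hφ'0 : φ' 0 = 0 := by
    simp [hφ'def]
  have hφ0 : φ 0 = 0 := by
    simp [hφdef]
  have hkey : ∀ v : ℝ, φ v ≤ 0 := by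
    intro v
    rcases le_total 0 v with h | h
    · have : AntitoneOn φ (Set.Ici 0) := by
        have hdiff : Differentiable ℝ φ := fun w => (hder w).differentiableAt
        apply antitoneOn_of_deriv_nonpos (convex_Ici 0) hdiff.continuous.continuousOn
          hdiff.differentiableOn
        intro x hx
        rw [interior_Ici] at hx
        rw [(hder x).deriv]
        calc φ' x ≤ φ' 0 := hanti (Set.mem_univ 0) (Set.mem_univ x) hx.le
        _ = 0 := hφ'0
      calc φ v ≤ φ 0 := this (Set.mem_Ici.2 le_rfl) (Set.mem_Ici.2 h) h
      _ = 0 := hφ0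
    · have : MonotoneOn φ (Set.Iic 0) := by
        have hdiff : Differentiable ℝ φ := fun w => (hder w).differentiableAt
        apply monotoneOn_of_deriv_nonneg (convex_Iic 0) hdiff.continuous.continuousOn
          hdiff.differentiableOn
        intro x hx
        rw [interior_Iic] at hx
        rw [(hder x).deriv]
        calc (0:ℝ) = φ' 0 := hφ'0.symm
        _ ≤ φ' x := hanti (Set.mem_univ x) (Set.mem_univ 0) hx.le
      calc φ v ≤ φ 0 := this (Set.mem_Iic.2 h) (Set.mem_Iic.2 le_rfl) h
      _ = 0 := hφ0
  have := hkey u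
  simp only [hφdef] at this
  linarith

private lemma hoeff_mgf (p : ℝ) (hp0 : 0 ≤ p) (hp1 : p ≤ 1) (l : ℝ) :
    (1 - p) * Real.exp (-(2 * p) * l) + p * Real.exp ((2 * (1 - p)) * l)
      ≤ Real.exp (l ^ 2 / 2) := by
  have hD : 0 < 1 - p + p * Real.exp (2 * l) := by
    rcases le_total (Real.exp (2 * l)) 1 with h | h
    · nlinarith [Real.exp_pos (2 * l)]
    · nlinarith [Real.exp_pos (2 * l)]
  have h := hoeff_aux p hp0 hp1 (2 * l)
  have h2 : 1 - p + p * Real.exp (2 * l) ≤ Real.exp (p * (2 * l) + (2 * l) ^ 2 / 8) :=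
    (Real.log_le_iff_le_exp hD).1 h
  have e1 : Real.exp (2 * l) * Real.exp (-(2 * p) * l) = Real.exp ((2 * (1 - p)) * l) := by
    rw [← Real.exp_add]; congr 1; ring
  calc (1 - p) * Real.exp (-(2 * p) * l) + p * Real.exp ((2 * (1 - p)) * l)
      = (1 - p + p * Real.exp (2 * l)) * Real.exp (-(2 * p) * l) := by rw [← e1]; ring
    _ ≤ Real.exp (p * (2 * l) + (2 * l) ^ 2 / 8) * Real.exp (-(2 * p) * l) :=
        mul_le_mul_of_nonneg_right h2 (Real.exp_pos _).le
    _ = Real.exp (l ^ 2 / 2) := by rw [← Real.exp_add]; congr 1; ring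

private lemma pm_mem_piFinset {n : ℕ} {x : Fin n → ℝ} (hx : ∀ i, x i = 1 ∨ x i = -1) :
    x ∈ Fintype.piFinset (fun _ : Fin n => ({1, -1} : Finset ℝ)) := by
  rw [Fintype.mem_piFinset]
  intro i
  rcases hx i with h | h <;> simp [h]

private lemma decomp2 {Ω : Type*} [MeasurableSpace Ω] (P : Measure Ω)
    {n : ℕ} (X Y : Ω → Fin n → ℝ)
    (hXval : ∀ ω i, X ω i = 1 ∨ X ω i = -1)
    (hYval : ∀ ω i, Y ω i = 1 ∨ Y ω i = -1)
    (hXmeas : Measurable X) (hYmeas : Measurable Y)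
    (Q : (Fin n → ℝ) → (Fin n → ℝ) → Prop) [∀ x y, Decidable (Q x y)] :
    P {ω | Q (X ω) (Y ω)} =
      ∑ z ∈ (Fintype.piFinset (fun _ : Fin n => ({1, -1} : Finset ℝ))) ×ˢ
          (Fintype.piFinset (fun _ : Fin n => ({1, -1} : Finset ℝ))),
        (if Q z.1 z.2 then P {ω | X ω = z.1 ∧ Y ω = z.2} else 0) := by
  classical
  set V := Fintype.piFinset (fun _ : Fin n => ({1, -1} : Finset ℝ)) with hV
  set s := (V ×ˢ V).filter (fun z => Q z.1 z.2) with hs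
  have hset : {ω | Q (X ω) (Y ω)} = ⋃ z ∈ s, {ω | X ω = z.1 ∧ Y ω = z.2} := by
    ext ω
    simp only [Set.mem_setOf_eq, Set.mem_iUnion, exists_prop]
    constructor
    · intro hQ
      refine ⟨(X ω, Y ω), ?_, rfl, rfl⟩
      rw [hs, Finset.mem_filter]
      exact ⟨Finset.mem_product.2 ⟨pm_mem_piFinset (hXval ω), pm_mem_piFinset (hYval ω)⟩, hQ⟩
    · rintro ⟨z, hz, hX, hY⟩
      rw [hs, Finset.mem_filter] at hz
      rw [hX, hY]
      exact hz.2
  have hmeas : ∀ z : (Fin n → ℝ) × (Fin n → ℝ), MeasurableSet {ω | X ω = z.1 ∧ Y ω = z.2} := by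
    intro z
    have : {ω | X ω = z.1 ∧ Y ω = z.2} = X ⁻¹' {z.1} ∩ Y ⁻¹' {z.2} := rfl
    rw [this]
    exact (hXmeas (measurableSet_singleton _)).inter (hYmeas (measurableSet_singleton _))
  have hdisj : (s : Set ((Fin n → ℝ) × (Fin n → ℝ))).PairwiseDisjoint
      (fun z => {ω | X ω = z.1 ∧ Y ω = z.2}) := by
    intro z _ z' _ hne
    refine Set.disjoint_left.2 ?_
    rintro ω ⟨h1, h2⟩ ⟨h1', h2'⟩
    exact hne (Prod.ext (h1.symm.trans h1') (h2.symm.trans h2'))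
  rw [hset, measure_biUnion_finset hdisj (fun z _ => hmeas z), hs, Finset.sum_filter]

private lemma sum_single_le_one {Ω : Type*} [MeasurableSpace Ω] (P : Measure Ω)
    [IsProbabilityMeasure P] {n : ℕ} (X : Ω → Fin n → ℝ) (hXmeas : Measurable X) :
    ∑ x ∈ Fintype.piFinset (fun _ : Fin n => ({1, -1} : Finset ℝ)),
      P {ω | X ω = x} ≤ 1 := by
  classical
  have hmeas : ∀ x : Fin n → ℝ, MeasurableSet {ω | X ω = x} := fun x =>
    hXmeas (measurableSet_singleton x)
  have hdisj : ((Fintype.piFinset (fun _ : Fin n => ({1, -1} : Finset ℝ)) : Finset _) :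
      Set (Fin n → ℝ)).PairwiseDisjoint (fun x => {ω | X ω = x}) := by
    intro x _ x' _ hne
    refine Set.disjoint_left.2 ?_
    rintro ω h1 h2
    exact hne ((h1 : X ω = x).symm.trans h2)
  rw [← measure_biUnion_finset hdisj (fun x _ => hmeas x)]
  calc P _ ≤ P Set.univ := measure_mono (Set.subset_univ _)
  _ = 1 := measure_univ
private lemma chernoff {n : ℕ} (hn : 1 ≤ n) (p S μ b : ℝ)
    (hp0 : 0 < p) (hp1 : p < 1 / 2) (hb : 0 < b) (hbμ : b < |μ - S|)
    (x : Fin n → ℝ) (hx : ∀ i, x i = 1 ∨ x i = -1)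
    (hxb : |(∑ i, x i) / n - μ| < b) :
    ∑ y ∈ Fintype.piFinset (fun _ : Fin n => ({1, -1} : Finset ℝ)),
      (if ((∑ i, x i) / n - S) * ((∑ i, y i) / n - (1 - 2 * p) * S) < 0 then
        ∏ i, (if y i = x i then 1 - p else p) else 0)
      ≤ Real.exp (-((n : ℝ) * ((1 - 2 * p) ^ 2 / 2 * (|μ - S| - b) ^ 2))) := by
  classical
  have hn0 : (0 : ℝ) < n := by exact_mod_cast hn
  set c : ℝ := |μ - S| - b with hc
  have hc0 : 0 < c := by simp [hc]; linarith
  set l : ℝ := (1 - 2 * p) * c with hl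
  have hl0 : 0 < l := by apply mul_pos (by linarith) hc0
  set σ : ℝ := if S < μ then 1 else -1 with hσ
  have hσ1 : σ = 1 ∨ σ = -1 := by
    rcases lt_or_ge S μ with h | h
    · left; simp [hσ, h]
    · right; simp [hσ, not_lt.2 h]
  have hσabs : σ * (μ - S) = |μ - S| := by
    have hne : μ ≠ S := by
      intro h; rw [h] at hbμ; simp at hbμ; linarith
    rcases lt_or_ge S μ with h | h
    · rw [hσ, if_pos h, one_mul, abs_of_pos (by linarith)]
    · have h' : μ - S < 0 := by
        rcases lt_or_eq_of_le h with h' | h'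
        · linarith
        · exact absurd h' hne
      rw [hσ, if_neg (not_lt.2 h), abs_of_neg h']; ring
  have hxS : c < σ * ((∑ i, x i) / n - S) := by
    have h1 : σ * ((∑ i, x i) / n - S) = σ * ((∑ i, x i) / n - μ) + σ * (μ - S) := by ring
    have h2 : -|(∑ i, x i) / n - μ| ≤ σ * ((∑ i, x i) / n - μ) := by
      rcases hσ1 with h | h <;> rw [h] <;>
        nlinarith [le_abs_self ((∑ i, x i) / (n:ℝ) - μ),
          neg_abs_le ((∑ i, x i) / (n:ℝ) - μ)]
    rw [h1, hσabs]
    have := abs_nonneg ((∑ i, x i) / n - μ)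
    simp only [hc]
    linarith
  -- pointwise bound
  have hpoint : ∀ y ∈ Fintype.piFinset (fun _ : Fin n => ({1, -1} : Finset ℝ)),
      (if ((∑ i, x i) / n - S) * ((∑ i, y i) / n - (1 - 2 * p) * S) < 0 then
        ∏ i, (if y i = x i then 1 - p else p) else 0)
      ≤ Real.exp (-(l * (n * l))) *
          ∏ i, (if y i = x i then 1 - p else p) *
            Real.exp (l * (σ * ((1 - 2 * p) * x i - y i))) := by
    intro y _
    have hprodnn : (0:ℝ) ≤ ∏ i, (if y i = x i then 1 - p else p) := by
      apply Finset.prod_nonneg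
      intro i _
      split <;> linarith
    have hRHSnn : (0:ℝ) ≤ Real.exp (-(l * (n * l))) *
        ∏ i, (if y i = x i then 1 - p else p) *
          Real.exp (l * (σ * ((1 - 2 * p) * x i - y i))) := by
      apply mul_nonneg (Real.exp_pos _).le
      apply Finset.prod_nonneg
      intro i _
      apply mul_nonneg _ (Real.exp_pos _).le
      split <;> linarith
    split
    case isFalse => exact hRHSnn
    case isTrue hbad =>
      -- the exponent sum is large
      have hy2 : σ * ((∑ i, y i) / n - (1 - 2 * p) * S) ≤ 0 := by
        rcases hσ1 with h | h <;> rw [h] at hxS ⊢ <;> nlinarith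
      have hgap : l < σ * ((1 - 2 * p) * ((∑ i, x i) / n) - (∑ i, y i) / n) := by
        have : σ * ((1 - 2 * p) * ((∑ i, x i) / n) - (∑ i, y i) / n)
            = (1 - 2 * p) * (σ * ((∑ i, x i) / n - S))
              - σ * ((∑ i, y i) / n - (1 - 2 * p) * S) := by ring
        rw [this, hl]
        nlinarith
    -- sum form
      have esum : ∑ i, σ * ((1 - 2 * p) * x i - y i)
          = (n : ℝ) * (σ * ((1 - 2 * p) * ((∑ i, x i) / n) - (∑ i, y i) / n)) := by
        field_simp
        rw [Finset.sum_congr rfl (fun i _ => show σ * ((1 - 2 * p) * x i - y i)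
          = σ * (1 - 2 * p) * x i - σ * y i by ring)]
        rw [Finset.sum_sub_distrib, ← Finset.mul_sum, ← Finset.mul_sum]
        ring
      have hsum : (n : ℝ) * l < ∑ i, σ * ((1 - 2 * p) * x i - y i) := by
        rw [esum]
        exact (mul_lt_mul_iff_right₀ hn0).2 hgap
      calc ∏ i, (if y i = x i then 1 - p else p)
          ≤ (∏ i, (if y i = x i then 1 - p else p)) *
              Real.exp (l * ((∑ i, σ * ((1 - 2 * p) * x i - y i)) - n * l)) := by
            nlinarith [Real.one_le_exp (show (0:ℝ) ≤
              l * ((∑ i, σ * ((1 - 2 * p) * x i - y i)) - n * l) from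
              mul_nonneg hl0.le (by linarith))]
        _ = Real.exp (-(l * (n * l))) *
              ∏ i, (if y i = x i then 1 - p else p) *
                Real.exp (l * (σ * ((1 - 2 * p) * x i - y i))) := by
            rw [Finset.prod_mul_distrib, ← Real.exp_sum]
            rw [show ∑ i, l * (σ * ((1 - 2 * p) * x i - y i))
              = l * ∑ i, σ * ((1 - 2 * p) * x i - y i) from (Finset.mul_sum _ _ _).symm]
            rw [show l * ((∑ i, σ * ((1 - 2 * p) * x i - y i)) - n * l)
              = -(l * (n * l)) + l * (∑ i, σ * ((1 - 2 * p) * x i - y i)) by ring,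
              Real.exp_add]
            ring
  -- factor bound
  have hfac : ∀ i : Fin n,
      ((if (1:ℝ) = x i then 1 - p else p) * Real.exp (l * (σ * ((1 - 2 * p) * x i - 1)))
        + (if (-1:ℝ) = x i then 1 - p else p) *
            Real.exp (l * (σ * ((1 - 2 * p) * x i - (-1)))))
        ≤ Real.exp (l ^ 2 / 2) := by
    intro i
    have hσsq : σ * σ = 1 := by rcases hσ1 with h | h <;> rw [h] <;> ring
    have hsq : (σ * l) ^ 2 / 2 = l ^ 2 / 2 := by
      rcases hσ1 with h | h <;> rw [h] <;> ring
    rcases hx i with h | h <;> rw [h]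
    · have := hoeff_mgf p hp0.le (by linarith) (σ * l)
      rw [hsq] at this
      have e1 : l * (σ * ((1 - 2 * p) * 1 - 1)) = -(2 * p) * (σ * l) := by ring
      have e2 : l * (σ * ((1 - 2 * p) * 1 - (-1))) = (2 * (1 - p)) * (σ * l) := by ring
      rw [if_pos rfl, if_neg (by norm_num), e1, e2]
      linarith
    · have := hoeff_mgf p hp0.le (by linarith) (-(σ * l))
      rw [show (-(σ * l)) ^ 2 / 2 = (σ * l) ^ 2 / 2 by ring, hsq] at this
      have e1 : l * (σ * ((1 - 2 * p) * (-1) - 1)) = (2 * (1 - p)) * (-(σ * l)) := by ring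
      have e2 : l * (σ * ((1 - 2 * p) * (-1) - (-1))) = -(2 * p) * (-(σ * l)) := by ring
      rw [if_neg (by norm_num), if_pos rfl, e1, e2]
      linarith
  calc ∑ y ∈ Fintype.piFinset (fun _ : Fin n => ({1, -1} : Finset ℝ)),
      (if ((∑ i, x i) / n - S) * ((∑ i, y i) / n - (1 - 2 * p) * S) < 0 then
        ∏ i, (if y i = x i then 1 - p else p) else 0)
      ≤ ∑ y ∈ Fintype.piFinset (fun _ : Fin n => ({1, -1} : Finset ℝ)),
          Real.exp (-(l * (n * l))) *
            ∏ i, (if y i = x i then 1 - p else p) *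
              Real.exp (l * (σ * ((1 - 2 * p) * x i - y i))) :=
        Finset.sum_le_sum hpoint
    _ = Real.exp (-(l * (n * l))) *
          ∏ i, ∑ v ∈ ({1, -1} : Finset ℝ),
            (if v = x i then 1 - p else p) * Real.exp (l * (σ * ((1 - 2 * p) * x i - v))) := by
        rw [← Finset.mul_sum, Finset.prod_univ_sum]
    _ ≤ Real.exp (-(l * (n * l))) * ∏ i : Fin n, Real.exp (l ^ 2 / 2) := by
        apply mul_le_mul_of_nonneg_left _ (Real.exp_pos _).le
        apply Finset.prod_le_prod
        · intro i _
          apply Finset.sum_nonneg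
          intro v _
          apply mul_nonneg _ (Real.exp_pos _).le
          split <;> linarith
        · intro i _
          rw [Finset.sum_pair (by norm_num : (1:ℝ) ≠ -1)]
          exact hfac i
    _ = Real.exp (-((n : ℝ) * ((1 - 2 * p) ^ 2 / 2 * (|μ - S| - b) ^ 2))) := by
        rw [Finset.prod_const, ← Real.exp_nat_mul, ← Real.exp_add, Finset.card_univ,
          Fintype.card_fin]
        congr 1
        rw [hl, hc]
        ring

/-- In the sentiment detection model, if `lim_{n→∞} E[X̄_n] = μ ≠ S`, and
there exist `0 < b < |μ - S|` and `α_b > 0` such that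
`limsup_{n→∞} (1/n) log P(|X̄_n - μ| ≥ b) ≤ -α_b`, then
`limsup_{n→∞} (1/n) log P_e^{(n)} ≤ -min{α_b, C_p (|μ - S| - b)²}` with `C_p = (1-2p)²/2`
(logarithms of probabilities are taken in the extended reals, so `log 0 = -∞`). -/
theorem supermajority_error_exponential_decay_of_mean
    {Ω : Type*} [MeasurableSpace Ω] (P : Measure Ω) [IsProbabilityMeasure P]
    (p S : ℝ) (hp0 : 0 < p) (hp1 : p < 1 / 2) (hS0 : -1 < S) (hS1 : S < 1)
    (X Y : (n : ℕ) → Ω → Fin n → ℝ)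
    (hXval : ∀ n ω i, X n ω i = 1 ∨ X n ω i = -1)
    (hYval : ∀ n ω i, Y n ω i = 1 ∨ Y n ω i = -1)
    (hXmeas : ∀ n, Measurable (X n))
    (hYmeas : ∀ n, Measurable (Y n))
    (hjoint : ∀ n (x y : Fin n → ℝ), (∀ i, x i = 1 ∨ x i = -1) →
      (∀ i, y i = 1 ∨ y i = -1) →
      (P {ω | X n ω = x ∧ Y n ω = y}).toReal
        = (P {ω | X n ω = x}).toReal * ∏ i, (if y i = x i then 1 - p else p))
    (μ : ℝ) (hμS : μ ≠ S)
    (hmean : Tendsto (fun n : ℕ => ∫ ω, (∑ i, X n ω i) / n ∂P) atTop (nhds μ))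
    (b αb : ℝ) (hb : 0 < b) (hbμ : b < |μ - S|) (hαb : 0 < αb)
    (hdev : limsup (fun n : ℕ =>
        (((n : ℝ)⁻¹ : ℝ) : EReal) * ENNReal.log (P {ω | b ≤ |(∑ i, X n ω i) / n - μ|}))
        atTop ≤ ((-αb : ℝ) : EReal)) :
    limsup (fun n : ℕ =>
        (((n : ℝ)⁻¹ : ℝ) : EReal) * ENNReal.log
          (P {ω | ((∑ i, X n ω i) / n - S) * ((∑ i, Y n ω i) / n - (1 - 2 * p) * S) < 0}))
      atTop ≤ ((-(min αb ((1 - 2 * p) ^ 2 / 2 * (|μ - S| - b) ^ 2)) : ℝ) : EReal) := by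
  classical
  set β : ℝ := (1 - 2 * p) ^ 2 / 2 * (|μ - S| - b) ^ 2 with hβ
  have hβ0 : 0 < β := by
    have h1 : 0 < 1 - 2 * p := by linarith
    have h2 : 0 < |μ - S| - b := by linarith
    positivity
  set A : ℕ → Set Ω := fun n => {ω | b ≤ |(∑ i, X n ω i) / n - μ|} with hA
  set E : ℕ → Set Ω := fun n =>
    {ω | ((∑ i, X n ω i) / n - S) * ((∑ i, Y n ω i) / n - (1 - 2 * p) * S) < 0} with hE
  -- key per-n bound
  have key : ∀ n : ℕ, 1 ≤ n →
      P (E n) ≤ P (A n) + ENNReal.ofReal (Real.exp (-((n : ℝ) * β))) := by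
    intro n hn
    set Q : (Fin n → ℝ) → (Fin n → ℝ) → Prop := fun x y =>
      (¬ b ≤ |(∑ i, x i) / n - μ|) ∧
        ((∑ i, x i) / n - S) * ((∑ i, y i) / n - (1 - 2 * p) * S) < 0 with hQ
    have hsub : E n ⊆ A n ∪ {ω | Q (X n ω) (Y n ω)} := by
      intro ω hω
      by_cases h : b ≤ |(∑ i, X n ω i) / n - μ|
      · exact Or.inl h
      · exact Or.inr ⟨h, hω⟩
    refine le_trans (le_trans (measure_mono hsub) (measure_union_le _ _)) ?_
    refine add_le_add le_rfl ?_
    -- bound P B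
    set V := Fintype.piFinset (fun _ : Fin n => ({1, -1} : Finset ℝ)) with hV
    have hBtoReal : (P {ω | Q (X n ω) (Y n ω)}).toReal ≤ Real.exp (-((n : ℝ) * β)) := by
      rw [decomp2 P (X n) (Y n) (hXval n) (hYval n) (hXmeas n) (hYmeas n) Q]
      rw [ENNReal.toReal_sum (fun z _ => by split <;> simp [measure_ne_top])]
      have hterm : ∀ z ∈ V ×ˢ V,
          ((if Q z.1 z.2 then P {ω | X n ω = z.1 ∧ Y n ω = z.2} else 0)).toReal
            = (P {ω | X n ω = z.1}).toReal *
                (if Q z.1 z.2 then ∏ i, (if z.2 i = z.1 i then 1 - p else p) else 0) := by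
        intro z hz
        rw [Finset.mem_product] at hz
        have hz1 : ∀ i, z.1 i = 1 ∨ z.1 i = -1 := by
          intro i
          have := (Fintype.mem_piFinset).1 hz.1 i
          simpa using this
        have hz2 : ∀ i, z.2 i = 1 ∨ z.2 i = -1 := by
          intro i
          have := (Fintype.mem_piFinset).1 hz.2 i
          simpa using this
        split
        · rw [hjoint n z.1 z.2 hz1 hz2]
        · simp
      rw [Finset.sum_congr rfl hterm, Finset.sum_product]
      have hinner : ∀ x ∈ V,
          ∑ y ∈ V, (P {ω | X n ω = x}).toReal *
              (if Q x y then ∏ i, (if y i = x i then 1 - p else p) else 0)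
            ≤ (P {ω | X n ω = x}).toReal * Real.exp (-((n : ℝ) * β)) := by
        intro x hx
        rw [← Finset.mul_sum]
        apply mul_le_mul_of_nonneg_left _ ENNReal.toReal_nonneg
        have hxpm : ∀ i, x i = 1 ∨ x i = -1 := by
          intro i
          have := (Fintype.mem_piFinset).1 hx i
          simpa using this
        by_cases hcase : b ≤ |(∑ i, x i) / n - μ|
        · have hzero : ∀ y ∈ V,
              (if Q x y then ∏ i, (if y i = x i then 1 - p else p) else 0) = 0 := by
            intro y _
            rw [if_neg]
            intro hq
            exact hq.1 hcase
          rw [Finset.sum_congr rfl hzero, Finset.sum_const_zero]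
          positivity
        · have heq : ∀ y ∈ V,
              (if Q x y then ∏ i, (if y i = x i then 1 - p else p) else 0)
                = (if ((∑ i, x i) / n - S) * ((∑ i, y i) / n - (1 - 2 * p) * S) < 0 then
                    ∏ i, (if y i = x i then 1 - p else p) else 0) := by
            intro y _
            by_cases h2 : ((∑ i, x i) / n - S) * ((∑ i, y i) / n - (1 - 2 * p) * S) < 0
            · rw [if_pos ⟨hcase, h2⟩, if_pos h2]
            · rw [if_neg (fun hq => h2 hq.2), if_neg h2]
          rw [Finset.sum_congr rfl heq]
          exact chernoff hn p S μ b hp0 hp1 hb hbμ x hxpm (not_le.1 hcase)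
      calc ∑ x ∈ V, ∑ y ∈ V, (P {ω | X n ω = x}).toReal *
            (if Q x y then ∏ i, (if y i = x i then 1 - p else p) else 0)
          ≤ ∑ x ∈ V, (P {ω | X n ω = x}).toReal * Real.exp (-((n : ℝ) * β)) :=
            Finset.sum_le_sum hinner
        _ = (∑ x ∈ V, (P {ω | X n ω = x}).toReal) * Real.exp (-((n : ℝ) * β)) :=
            (Finset.sum_mul _ _ _).symm
        _ ≤ 1 * Real.exp (-((n : ℝ) * β)) := by
            apply mul_le_mul_of_nonneg_right _ (Real.exp_pos _).le
            have h := sum_single_le_one P (X n) (hXmeas n)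
            have h2 := ENNReal.toReal_mono (by simp) h
            rwa [ENNReal.toReal_sum (fun x _ => measure_ne_top P _), ENNReal.toReal_one] at h2
        _ = Real.exp (-((n : ℝ) * β)) := one_mul _
    calc P {ω | Q (X n ω) (Y n ω)}
        = ENNReal.ofReal ((P {ω | Q (X n ω) (Y n ω)}).toReal) :=
          (ENNReal.ofReal_toReal (measure_ne_top P _)).symm
      _ ≤ ENNReal.ofReal (Real.exp (-((n : ℝ) * β))) := ENNReal.ofReal_le_ofReal hBtoReal
  -- EReal pointwise bound
  have step : ∀ n : ℕ, 1 ≤ n →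
      (((n : ℝ)⁻¹ : ℝ) : EReal) * ENNReal.log (P (E n)) ≤
        (((n : ℝ)⁻¹ * Real.log 2 : ℝ) : EReal) +
          max ((((n : ℝ)⁻¹ : ℝ) : EReal) * ENNReal.log (P (A n))) ((-β : ℝ) : EReal) := by
    intro n hn
    have hn0 : (0 : ℝ) < (n : ℝ) := by exact_mod_cast hn
    have hinv0 : (0 : ℝ) ≤ (n : ℝ)⁻¹ := by positivity
    have h1 : P (E n) ≤ 2 * max (P (A n)) (ENNReal.ofReal (Real.exp (-((n : ℝ) * β)))) := by
      calc P (E n) ≤ P (A n) + ENNReal.ofReal (Real.exp (-((n : ℝ) * β))) := key n hn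
        _ ≤ max (P (A n)) (ENNReal.ofReal (Real.exp (-((n : ℝ) * β)))) +
            max (P (A n)) (ENNReal.ofReal (Real.exp (-((n : ℝ) * β)))) :=
          add_le_add (le_max_left _ _) (le_max_right _ _)
        _ = 2 * max (P (A n)) (ENNReal.ofReal (Real.exp (-((n : ℝ) * β)))) := (two_mul _).symm
    have h2 : ENNReal.log (P (E n)) ≤ ((Real.log 2 : ℝ) : EReal) +
        max (ENNReal.log (P (A n))) ((-((n : ℝ) * β) : ℝ) : EReal) := by
      calc ENNReal.log (P (E n))
          ≤ ENNReal.log (2 * max (P (A n)) (ENNReal.ofReal (Real.exp (-((n : ℝ) * β))))) :=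
            ENNReal.log_monotone h1
        _ = ENNReal.log 2 +
            ENNReal.log (max (P (A n)) (ENNReal.ofReal (Real.exp (-((n : ℝ) * β))))) :=
            ENNReal.log_mul_add
        _ = ((Real.log 2 : ℝ) : EReal) +
            max (ENNReal.log (P (A n))) ((-((n : ℝ) * β) : ℝ) : EReal) := by
            rw [ENNReal.log_monotone.map_max,
              ENNReal.log_ofReal_of_pos (Real.exp_pos _), Real.log_exp,
              show (2 : ENNReal) = ENNReal.ofReal 2 from (by norm_num),
              ENNReal.log_ofReal_of_pos (by norm_num : (0:ℝ) < 2)]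
    have h3 := mul_le_mul_of_nonneg_left h2
      (by exact_mod_cast hinv0 : (0 : EReal) ≤ (((n : ℝ)⁻¹ : ℝ) : EReal))
    refine h3.trans ?_
    have hLtop : ENNReal.log (P (A n)) ≠ ⊤ := by
      simp [ENNReal.log_eq_top_iff, measure_ne_top]
    rcases eq_or_ne (ENNReal.log (P (A n))) ⊥ with hbot | hne
    · rw [hbot, max_eq_right (bot_le : (⊥ : EReal) ≤ _),
        EReal.coe_mul_bot_of_pos (by exact_mod_cast (by positivity : (0:ℝ) < (n:ℝ)⁻¹)),
        max_eq_right (bot_le : (⊥ : EReal) ≤ _), ← EReal.coe_add, ← EReal.coe_mul,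
        ← EReal.coe_add, EReal.coe_le_coe_iff]
      have : (n : ℝ)⁻¹ * ((n : ℝ) * β) = β := by field_simp
      nlinarith [this]
    · lift ENNReal.log (P (A n)) to ℝ using ⟨hLtop, hne⟩ with r hr
      rw [← EReal.coe_mul, ← EReal.coe_strictMono.monotone.map_max,
        ← EReal.coe_add, ← EReal.coe_mul, ← EReal.coe_strictMono.monotone.map_max,
        ← EReal.coe_add, EReal.coe_le_coe_iff]
      have he : (n : ℝ)⁻¹ * ((n : ℝ) * β) = β := by field_simp
      rcases le_total r (-((n : ℝ) * β)) with h | h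
      · rw [max_eq_right h, max_eq_right (by nlinarith : (n:ℝ)⁻¹ * r ≤ -β)]
        rw [mul_add]
        nlinarith
      · rw [max_eq_left h, max_eq_left (by nlinarith : -β ≤ (n:ℝ)⁻¹ * r)]
        rw [mul_add]
  -- conclude
  set u : ℕ → EReal := fun n : ℕ => (((n : ℝ)⁻¹ * Real.log 2 : ℝ) : EReal) with hu_def
  set v : ℕ → EReal := fun n : ℕ =>
    max ((((n : ℝ)⁻¹ : ℝ) : EReal) * ENNReal.log (P (A n))) ((-β : ℝ) : EReal) with hv_def
  have hle : (fun n : ℕ => (((n : ℝ)⁻¹ : ℝ) : EReal) * ENNReal.log (P (E n))) ≤ᶠ[atTop]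
      u + v := by
    filter_upwards [eventually_ge_atTop 1] with n hn
    exact step n hn
  have h1 : limsup (fun n : ℕ => (((n : ℝ)⁻¹ : ℝ) : EReal) * ENNReal.log (P (E n))) atTop
      ≤ limsup (u + v) atTop := limsup_le_limsup hle
  have hu : Tendsto u atTop (nhds (0 : EReal)) := by
    rw [show ((0:EReal)) = ((0:ℝ):EReal) by simp, hu_def]
    rw [EReal.tendsto_coe]
    simpa using tendsto_inv_atTop_nhds_zero_nat.mul_const (Real.log 2)
  have hulim : limsup u atTop = 0 := hu.limsup_eq
  have hdev' : limsup (fun n : ℕ =>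
      (((n : ℝ)⁻¹ : ℝ) : EReal) * ENNReal.log (P (A n))) atTop ≤ ((-αb : ℝ) : EReal) := hdev
  have hvlim : limsup v atTop ≤ max ((-αb : ℝ) : EReal) ((-β : ℝ) : EReal) := by
    rw [hv_def, limsup_max]
    exact max_le_max hdev' (limsup_const _).le
  have hfinal : ((-(min αb β) : ℝ) : EReal) = max ((-αb : ℝ) : EReal) ((-β : ℝ) : EReal) := by
    rw [show -min αb β = max (-αb) (-β) by
      rcases le_total αb β with h | h
      · rw [min_eq_left h, max_eq_left (by linarith)]
      · rw [min_eq_right h, max_eq_right (by linarith)]]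
    exact EReal.coe_strictMono.monotone.map_max
  calc limsup (fun n : ℕ => (((n : ℝ)⁻¹ : ℝ) : EReal) * ENNReal.log (P (E n))) atTop
      ≤ limsup (u + v) atTop := h1
    _ ≤ limsup u atTop + limsup v atTop :=
        EReal.limsup_add_le (Or.inl (by rw [hulim]; simp)) (Or.inl (by rw [hulim]; simp))
    _ ≤ 0 + max ((-αb : ℝ) : EReal) ((-β : ℝ) : EReal) := by
        rw [hulim]
        exact add_le_add le_rfl hvlim
    _ = ((-(min αb β) : ℝ) : EReal) := by rw [zero_add, hfinal]
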